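/- Let X be a measurable space with a σ-finite measure ν, P a nonempty finite index set, and for each p ∈ P let μ_p be a probability measure on X × ℝ with ∫ y² dμ_p < ∞, whose marginal ρ_p on X satisfies ρ_p ≪ ν with density w_p = dρ_p/dν. For each p let f_p : X → ℝ be measurable with ∫ f_p² dρ_p < ∞ minimizing f ↦ ∫ (f(x) − y)² dμ_p(x,y) over all measurable f : X → ℝ. Fix λ ∈ Δ^P and define f_λ : X → ℝ by f_λ(x) = (Σ_{p∈P} λ_p w_p(x) f_p(x)) / (Σ_{q∈P} λ_q w_q(x)) when Σ_{q∈P} λ_q w_q(x) > 0, and f_λ(x) = 0 otherwise. Then f_λ minimizes f ↦ ∫ (f(x) − y)² d(Σ_{p∈P} λ_p μ_p)(x,y) over all measurable f : X → ℝ. -/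

import Mathlib

open MeasureTheory
open scoped BigOperators ENNReal Classical

/-- The mean-squared-error risk of predictor `f` under a joint distribution `μ` on `X × ℝ`,
valued in `[0, ∞]`. -/
noncomputable def mseRisk {X : Type*} [MeasurableSpace X]
    (μ : Measure (X × ℝ)) (f : X → ℝ) : ℝ≥0∞ :=
  ∫⁻ z, ENNReal.ofReal ((f z.1 - z.2) ^ 2) ∂μ

set_option maxHeartbeats 1000000
set_option linter.unusedSectionVars false

section Helpers
variable {α : Type*} {m : MeasurableSpace α} {μ : Measure α}

lemma integrable_mul_of_sq {a b : α → ℝ} (ha : Integrable (fun x => a x ^ 2) μ)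
    (hb : Integrable (fun x => b x ^ 2) μ)
    (hab : AEStronglyMeasurable (fun x => a x * b x) μ) :
    Integrable (fun x => a x * b x) μ := by
  refine Integrable.mono' (ha.add hb) hab (Filter.Eventually.of_forall fun x => ?_)
  have h1 : |a x * b x| = |a x| * |b x| := abs_mul _ _
  have := sq_nonneg (|a x| - |b x|)
  simp only [Pi.add_apply, Real.norm_eq_abs, h1]
  nlinarith [sq_abs (a x), sq_abs (b x)]

lemma integrable_sq_sub {a b : α → ℝ} (ha : Integrable (fun x => a x ^ 2) μ)
    (hb : Integrable (fun x => b x ^ 2) μ)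
    (hab : AEStronglyMeasurable (fun x => (a x - b x) ^ 2) μ) :
    Integrable (fun x => (a x - b x) ^ 2) μ := by
  refine Integrable.mono' (((ha.const_mul 2)).add (hb.const_mul 2)) hab
    (Filter.Eventually.of_forall fun x => ?_)
  simp only [Pi.add_apply, Real.norm_eq_abs, abs_of_nonneg (sq_nonneg (a x - b x))]
  nlinarith [sq_nonneg (a x + b x)]

end Helpers

section Pointwise
variable {P : Type*} [Fintype P]

/-- pointwise weighted least squares optimality -/
lemma weighted_min (lam w fv : P → ℝ) (hl : ∀ p, 0 ≤ lam p) (hw : ∀ p, 0 ≤ w p) (t : ℝ) :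
    ∑ p, lam p * w p * ((if 0 < ∑ q, lam q * w q
        then (∑ p, lam p * w p * fv p) / (∑ q, lam q * w q) else 0) - fv p) ^ 2
      ≤ ∑ p, lam p * w p * (t - fv p) ^ 2 := by
  set W := ∑ q, lam q * w q with hW
  set S := ∑ p, lam p * w p * fv p with hS
  have hlw : ∀ p, 0 ≤ lam p * w p := fun p => mul_nonneg (hl p) (hw p)
  by_cases hpos : 0 < W
  · simp only [if_pos hpos]
    have expand : ∀ c : ℝ, ∑ p, lam p * w p * (c - fv p) ^ 2
        = c ^ 2 * W - 2 * c * S + ∑ p, lam p * w p * fv p ^ 2 := by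
      intro c
      rw [hW, hS, Finset.mul_sum, Finset.mul_sum, ← Finset.sum_sub_distrib,
        ← Finset.sum_add_distrib]
      exact Finset.sum_congr rfl fun p _ => by ring
    rw [expand, expand]
    have key : (S / W) ^ 2 * W - 2 * (S / W) * S ≤ t ^ 2 * W - 2 * t * S := by
      have h1 : (S / W) ^ 2 * W - 2 * (S / W) * S = -(S ^ 2) / W := by
        field_simp; ring
      rw [h1, div_le_iff₀ hpos]
      nlinarith [sq_nonneg (t * W - S)]
    linarith
  · have hW0 : W = 0 := le_antisymm (not_lt.1 hpos) (Finset.sum_nonneg fun p _ => hlw p)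
    have hz : ∀ p ∈ Finset.univ, lam p * w p = 0 :=
      (Finset.sum_eq_zero_iff_of_nonneg fun p _ => hlw p).1 hW0
    rw [Finset.sum_eq_zero fun p hp => by rw [hz p hp, zero_mul],
      Finset.sum_eq_zero fun p hp => by rw [hz p hp, zero_mul]]

/-- pointwise Cauchy–Schwarz: `W * f_λ² ≤ ∑ λ w f²`. -/
lemma weighted_sq_le (lam w fv : P → ℝ) (hl : ∀ p, 0 ≤ lam p) (hw : ∀ p, 0 ≤ w p) :
    (∑ q, lam q * w q) * (if 0 < ∑ q, lam q * w q
        then (∑ p, lam p * w p * fv p) / (∑ q, lam q * w q) else 0) ^ 2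
      ≤ ∑ p, lam p * w p * fv p ^ 2 := by
  set W := ∑ q, lam q * w q with hW
  set S := ∑ p, lam p * w p * fv p with hS
  have hlw : ∀ p, 0 ≤ lam p * w p := fun p => mul_nonneg (hl p) (hw p)
  by_cases hpos : 0 < W
  · simp only [if_pos hpos]
    have hCS : S ^ 2 ≤ W * ∑ p, lam p * w p * fv p ^ 2 := by
      have := Finset.sum_mul_sq_le_sq_mul_sq Finset.univ
        (fun p => Real.sqrt (lam p * w p)) (fun p => Real.sqrt (lam p * w p) * fv p)
      have e1 : ∀ p : P, Real.sqrt (lam p * w p) * (Real.sqrt (lam p * w p) * fv p)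
          = lam p * w p * fv p := fun p => by
        rw [← mul_assoc, Real.mul_self_sqrt (hlw p)]
      have e2 : ∀ p : P, Real.sqrt (lam p * w p) ^ 2 = lam p * w p :=
        fun p => Real.sq_sqrt (hlw p)
      have e3 : ∀ p : P, (Real.sqrt (lam p * w p) * fv p) ^ 2 = lam p * w p * fv p ^ 2 :=
        fun p => by rw [mul_pow, e2 p]
      simp only [e1, e2, e3] at this
      rwa [hS, hW]
    have h2 : W * (S / W) ^ 2 = S ^ 2 / W := by
      field_simp
    rw [h2, div_le_iff₀ hpos]
    calc S ^ 2 ≤ W * ∑ p, lam p * w p * fv p ^ 2 := hCS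
      _ = (∑ p, lam p * w p * fv p ^ 2) * W := by ring
  · simp only [if_neg hpos]
    have hW0 : W = 0 := le_antisymm (not_lt.1 hpos) (Finset.sum_nonneg fun p _ => hlw p)
    rw [hW0]
    simpa using Finset.sum_nonneg fun p _ => mul_nonneg (hlw p) (sq_nonneg _)

end Pointwise

section PerSource
variable {X : Type*} [MeasurableSpace X] {μ : Measure (X × ℝ)} [IsProbabilityMeasure μ]

/-- squares integrable pulled back from marginal. -/
lemma intSq_of_lintegral {u : X → ℝ} (hu : Measurable u)
    (h : ∫⁻ x, ENNReal.ofReal (u x ^ 2) ∂(μ.map Prod.fst) < ∞) :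
    Integrable (fun z : X × ℝ => u z.1 ^ 2) μ := by
  refine ⟨((hu.comp measurable_fst).pow_const 2).aestronglyMeasurable, ?_⟩
  rw [hasFiniteIntegral_iff_ofReal (Filter.Eventually.of_forall fun z => sq_nonneg _)]
  rwa [lintegral_map (((hu.pow_const 2).ennreal_ofReal)) measurable_fst] at h

lemma intY_of_lintegral (hY : ∫⁻ z : X × ℝ, ENNReal.ofReal (z.2 ^ 2) ∂μ < ∞) :
    Integrable (fun z : X × ℝ => z.2 ^ 2) μ := by
  refine ⟨(measurable_snd.pow_const 2).aestronglyMeasurable, ?_⟩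
  rwa [hasFiniteIntegral_iff_ofReal (Filter.Eventually.of_forall fun z => sq_nonneg _)]

/-- residual square integrable -/
lemma int_res_sq {u : X → ℝ} (hu : Measurable u)
    (huI : Integrable (fun z : X × ℝ => u z.1 ^ 2) μ)
    (hY : Integrable (fun z : X × ℝ => z.2 ^ 2) μ) :
    Integrable (fun z : X × ℝ => (u z.1 - z.2) ^ 2) μ :=
  integrable_sq_sub huI hY
    (((hu.comp measurable_fst).sub measurable_snd).pow_const 2).aestronglyMeasurable

/-- mseRisk as ofReal of a Bochner integral. -/
lemma mseRisk_eq_ofReal {u : X → ℝ}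
    (hI : Integrable (fun z : X × ℝ => (u z.1 - z.2) ^ 2) μ) :
    mseRisk μ u = ENNReal.ofReal (∫ z, (u z.1 - z.2) ^ 2 ∂μ) :=
  (ofReal_integral_eq_lintegral_ofReal hI
    (Filter.Eventually.of_forall fun z => sq_nonneg _)).symm

/-- Orthogonality of the residual of an optimal predictor. -/
lemma orth {f : X → ℝ} (hf : Measurable f)
    (hfI : Integrable (fun z : X × ℝ => f z.1 ^ 2) μ)
    (hY : Integrable (fun z : X × ℝ => z.2 ^ 2) μ)
    (hOpt : ∀ g : X → ℝ, Measurable g → mseRisk μ f ≤ mseRisk μ g)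
    {u : X → ℝ} (hu : Measurable u)
    (huI : Integrable (fun z : X × ℝ => u z.1 ^ 2) μ) :
    ∫ z, u z.1 * (f z.1 - z.2) ∂μ = 0 := by
  set A := ∫ z, u z.1 ^ 2 ∂μ with hA
  set B := ∫ z, u z.1 * (f z.1 - z.2) ∂μ with hB
  have hres := int_res_sq hf hfI hY
  have hcross : Integrable (fun z : X × ℝ => u z.1 * (f z.1 - z.2)) μ :=
    integrable_mul_of_sq huI (int_res_sq hf hfI hY)
      ((hu.comp measurable_fst).mul ((hf.comp measurable_fst).sub measurable_snd)).aestronglyMeasurable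
  have key : ∀ t : ℝ, 0 ≤ t ^ 2 * A + 2 * t * B := by
    intro t
    have hgmeas : Measurable fun x => f x + t * u x := hf.add (hu.const_mul t)
    have hgsq : Integrable (fun z : X × ℝ => (f z.1 + t * u z.1) ^ 2) μ := by
      have : Integrable (fun z : X × ℝ => 2 * f z.1 ^ 2 + 2 * (t * u z.1) ^ 2) μ := by
        refine (hfI.const_mul 2).add ?_
        have := (huI.const_mul (2 * t ^ 2))
        refine this.congr (Filter.Eventually.of_forall fun z => by ring)
      refine Integrable.mono' this
        (((hf.comp measurable_fst).add ((hu.comp measurable_fst).const_mul t)).pow_const 2).aestronglyMeasurable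
        (Filter.Eventually.of_forall fun z => ?_)
      simp only [Pi.add_apply, Real.norm_eq_abs]
      rw [abs_of_nonneg (sq_nonneg _)]
      nlinarith [sq_nonneg (f z.1 - t * u z.1)]
    have hgres := int_res_sq hgmeas hgsq hY
    have h := hOpt (fun x => f x + t * u x) hgmeas
    rw [mseRisk_eq_ofReal hres, mseRisk_eq_ofReal hgres] at h
    rw [ENNReal.ofReal_le_ofReal_iff (integral_nonneg fun z => sq_nonneg _)] at h
    have expand : ∫ z, ((f z.1 + t * u z.1) - z.2) ^ 2 ∂μ
        = (∫ z, (f z.1 - z.2) ^ 2 ∂μ) + (t ^ 2 * A + 2 * t * B) := by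
      have e1 : ∀ z : X × ℝ, ((f z.1 + t * u z.1) - z.2) ^ 2
          = (f z.1 - z.2) ^ 2 + (t ^ 2 * u z.1 ^ 2 + 2 * t * (u z.1 * (f z.1 - z.2))) := by
        intro z; ring
      have hI1 : Integrable (fun z : X × ℝ => t ^ 2 * u z.1 ^ 2) μ := huI.const_mul (t ^ 2)
      have hI2 : Integrable (fun z : X × ℝ => 2 * t * (u z.1 * (f z.1 - z.2))) μ :=
        hcross.const_mul (2 * t)
      have hI12 : Integrable
          (fun z : X × ℝ => t ^ 2 * u z.1 ^ 2 + 2 * t * (u z.1 * (f z.1 - z.2))) μ := hI1.add hI2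
      rw [integral_congr_ae (Filter.Eventually.of_forall e1)]
      rw [integral_add hres hI12, integral_add hI1 hI2,
        integral_const_mul, integral_const_mul]
    rw [expand] at h
    linarith
  have hA0 : 0 ≤ A := integral_nonneg fun z => sq_nonneg _
  have h1 := key (-(B / (A + 1)))
  have hpos : (0:ℝ) < A + 1 := by linarith
  have e : (-(B / (A + 1))) ^ 2 * A + 2 * (-(B / (A + 1))) * B
      = (B ^ 2 * A - 2 * B ^ 2 * (A + 1)) / (A + 1) ^ 2 := by
    field_simp; ring
  rw [e, le_div_iff₀ (by positivity)] at h1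
  have hB2 : B ^ 2 ≤ 0 := by nlinarith
  have := sq_nonneg B
  have : B ^ 2 = 0 := le_antisymm hB2 this
  exact sq_eq_zero_iff.mp this

/-- Pythagoras decomposition of the risk. -/
lemma pyth {f : X → ℝ} (hf : Measurable f)
    (hfI : Integrable (fun z : X × ℝ => f z.1 ^ 2) μ)
    (hY : Integrable (fun z : X × ℝ => z.2 ^ 2) μ)
    (hOpt : ∀ g : X → ℝ, Measurable g → mseRisk μ f ≤ mseRisk μ g)
    {u : X → ℝ} (hu : Measurable u)
    (huI : Integrable (fun z : X × ℝ => u z.1 ^ 2) μ) :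
    mseRisk μ u = mseRisk μ f
      + ∫⁻ x, ENNReal.ofReal ((u x - f x) ^ 2) ∂(μ.map Prod.fst) := by
  have hres_f := int_res_sq hf hfI hY
  have hres_u := int_res_sq hu huI hY
  have hdiff : Integrable (fun z : X × ℝ => (u z.1 - f z.1) ^ 2) μ :=
    integrable_sq_sub huI hfI
      (((hu.comp measurable_fst).sub (hf.comp measurable_fst)).pow_const 2).aestronglyMeasurable
  have horth := orth hf hfI hY hOpt (hu.sub hf)
    (hdiff.congr (Filter.Eventually.of_forall fun z => rfl))
  -- horth : ∫ (u - f) z.1 * (f z.1 - z.2) = 0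
  have expand : ∫ z, (u z.1 - z.2) ^ 2 ∂μ
      = (∫ z, (f z.1 - z.2) ^ 2 ∂μ) + ∫ z, (u z.1 - f z.1) ^ 2 ∂μ := by
    have hcross : Integrable (fun z : X × ℝ => (u z.1 - f z.1) * (f z.1 - z.2)) μ :=
      integrable_mul_of_sq hdiff hres_f
        (((hu.comp measurable_fst).sub (hf.comp measurable_fst)).mul
          ((hf.comp measurable_fst).sub measurable_snd)).aestronglyMeasurable
    have e1 : ∀ z : X × ℝ, (u z.1 - z.2) ^ 2
        = (f z.1 - z.2) ^ 2 + ((u z.1 - f z.1) ^ 2 + 2 * ((u z.1 - f z.1) * (f z.1 - z.2))) := by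
      intro z; ring
    have hI2 : Integrable (fun z : X × ℝ => 2 * ((u z.1 - f z.1) * (f z.1 - z.2))) μ :=
      hcross.const_mul 2
    have hI12 : Integrable
        (fun z : X × ℝ => (u z.1 - f z.1) ^ 2 + 2 * ((u z.1 - f z.1) * (f z.1 - z.2))) μ :=
      hdiff.add hI2
    rw [integral_congr_ae (Filter.Eventually.of_forall e1),
      integral_add hres_f hI12, integral_add hdiff hI2, integral_const_mul,
      show ∫ z, (u z.1 - f z.1) * (f z.1 - z.2) ∂μ = 0 from horth]
    ring
  rw [mseRisk_eq_ofReal hres_u, mseRisk_eq_ofReal hres_f, expand,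
    ENNReal.ofReal_add (integral_nonneg fun z => sq_nonneg _) (integral_nonneg fun z => sq_nonneg _)]
  congr 1
  rw [lintegral_map (f := fun x => ENNReal.ofReal ((u x - f x) ^ 2))
    (((hu.sub hf).pow_const 2).ennreal_ofReal) measurable_fst]
  exact ofReal_integral_eq_lintegral_ofReal hdiff
    (Filter.Eventually.of_forall fun z => sq_nonneg _)

end PerSource

/-- covariate shift. Let `ν` be σ-finite on `X` and for each `p` let `μ p` be
a probability measure on `X × ℝ` with square-integrable `y`, whose `X`-marginal `ρ p` has
density `w p ≥ 0` w.r.t. `ν`. Let `f p` be a square-integrable Bayes optimal (MSE-minimizing)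
predictor for `μ p`. Fix `λ` in the simplex and define
`f_λ(x) = (Σ_p λ_p w_p(x) f_p(x)) / (Σ_q λ_q w_q(x))` when the denominator is positive and `0`
otherwise. Then `f_λ` minimizes the MSE risk for the mixture `Σ_p λ_p μ_p` over all measurable
predictors. -/
theorem bayes_optimal_of_mixture_covariate_shift_mse
    {X : Type*} [MeasurableSpace X] (ν : Measure X) [SigmaFinite ν]
    {P : Type*} [Fintype P] [Nonempty P]
    (μ : P → Measure (X × ℝ)) (hProb : ∀ p, IsProbabilityMeasure (μ p))
    (hY : ∀ p, ∫⁻ z, ENNReal.ofReal (z.2 ^ 2) ∂(μ p) < ∞)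
    (w : P → X → ℝ) (hwMeas : ∀ p, Measurable (w p)) (hwNonneg : ∀ p x, 0 ≤ w p x)
    (hDens : ∀ p, (μ p).map Prod.fst = ν.withDensity (fun x => ENNReal.ofReal (w p x)))
    (f : P → X → ℝ) (hfMeas : ∀ p, Measurable (f p))
    (hfL2 : ∀ p, ∫⁻ x, ENNReal.ofReal (f p x ^ 2) ∂((μ p).map Prod.fst) < ∞)
    (hfOpt : ∀ p, ∀ g : X → ℝ, Measurable g → mseRisk (μ p) (f p) ≤ mseRisk (μ p) g)
    (lam : P → ℝ) (hNonneg : ∀ p, 0 ≤ lam p) (hSum : (∑ p, lam p) = 1) :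
    ∀ g : X → ℝ, Measurable g →
      mseRisk (∑ p, ENNReal.ofReal (lam p) • μ p)
          (fun x => if 0 < ∑ q, lam q * w q x
            then (∑ p, lam p * w p x * f p x) / (∑ q, lam q * w q x) else 0)
        ≤ mseRisk (∑ p, ENNReal.ofReal (lam p) • μ p) g := by
  intro g hg
  haveI := hProb
  set c : P → ℝ≥0∞ := fun p => ENNReal.ofReal (lam p) with hc
  set fl : X → ℝ := fun x => if 0 < ∑ q, lam q * w q x
      then (∑ p, lam p * w p x * f p x) / (∑ q, lam q * w q x) else 0 with hfl
  have hWmeas : Measurable fun x => ∑ q, lam q * w q x :=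
    Finset.measurable_sum _ fun q _ => (hwMeas q).const_mul (lam q)
  have hSmeas : Measurable fun x => ∑ p, lam p * w p x * f p x :=
    Finset.measurable_sum _ fun p _ => ((hwMeas p).const_mul (lam p)).mul (hfMeas p)
  have hflMeas : Measurable fl :=
    Measurable.ite (measurableSet_lt measurable_const hWmeas) (hSmeas.div hWmeas)
      measurable_const
  -- mixture decomposition
  have hmix : ∀ u : X → ℝ, mseRisk (∑ p, c p • μ p) u = ∑ p, c p * mseRisk (μ p) u := by
    intro u
    rw [mseRisk, lintegral_finset_sum_measure]
    exact Finset.sum_congr rfl fun p _ => lintegral_smul_measure _ _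
  rw [hmix, hmix]
  by_cases hTop : (∑ p, c p * mseRisk (μ p) g) = ⊤
  · exact hTop ▸ le_top
  -- basic integrabilities
  have hIY : ∀ p, Integrable (fun z : X × ℝ => z.2 ^ 2) (μ p) :=
    fun p => intY_of_lintegral (hY p)
  have hIf : ∀ p, Integrable (fun z : X × ℝ => f p z.1 ^ 2) (μ p) :=
    fun p => intSq_of_lintegral (hfMeas p) (hfL2 p)
  -- marginal rewriting
  have hrw : ∀ (p : P) (u : X → ℝ), Measurable u →
      ∫⁻ x, ENNReal.ofReal (u x) ∂((μ p).map Prod.fst)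
        = ∫⁻ x, ENNReal.ofReal (w p x) * ENNReal.ofReal (u x) ∂ν := by
    intro p u hu
    rw [hDens p, lintegral_withDensity_eq_lintegral_mul ν
      ((hwMeas p).ennreal_ofReal) hu.ennreal_ofReal]
    simp [Pi.mul_apply]
  -- integrability of g for active sources
  have hIg : ∀ p, 0 < lam p → Integrable (fun z : X × ℝ => g z.1 ^ 2) (μ p) := by
    intro p hp
    have hgfin : mseRisk (μ p) g < ⊤ := by
      refine ENNReal.lt_top_of_mul_ne_top_right (a := c p) ?_
        (by simp only [hc, ne_eq, ENNReal.ofReal_eq_zero, not_le]; exact hp)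
      exact (ENNReal.sum_lt_top.1 (lt_top_iff_ne_top.2 hTop) p (Finset.mem_univ p)).ne
    refine ⟨((hg.comp measurable_fst).pow_const 2).aestronglyMeasurable, ?_⟩
    rw [hasFiniteIntegral_iff_ofReal (Filter.Eventually.of_forall fun z => sq_nonneg _)]
    have hb : ∀ z : X × ℝ, ENNReal.ofReal (g z.1 ^ 2)
        ≤ 2 * ENNReal.ofReal ((g z.1 - z.2) ^ 2) + 2 * ENNReal.ofReal (z.2 ^ 2) := by
      intro z
      calc ENNReal.ofReal (g z.1 ^ 2)
          ≤ ENNReal.ofReal (2 * (g z.1 - z.2) ^ 2 + 2 * z.2 ^ 2) :=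
            ENNReal.ofReal_le_ofReal (by nlinarith [sq_nonneg (g z.1 - 2 * z.2)])
        _ = 2 * ENNReal.ofReal ((g z.1 - z.2) ^ 2) + 2 * ENNReal.ofReal (z.2 ^ 2) := by
            rw [ENNReal.ofReal_add (by positivity) (by positivity),
              ENNReal.ofReal_mul (by norm_num), ENNReal.ofReal_mul (by norm_num)]
            norm_num
    calc ∫⁻ z, ENNReal.ofReal (g z.1 ^ 2) ∂(μ p)
        ≤ ∫⁻ z, (2 * ENNReal.ofReal ((g z.1 - z.2) ^ 2) + 2 * ENNReal.ofReal (z.2 ^ 2)) ∂(μ p) :=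
          lintegral_mono hb
      _ = 2 * mseRisk (μ p) g + 2 * ∫⁻ z, ENNReal.ofReal (z.2 ^ 2) ∂(μ p) := by
          have hm1 : Measurable fun z : X × ℝ => ENNReal.ofReal ((g z.1 - z.2) ^ 2) :=
            (((hg.comp measurable_fst).sub measurable_snd).pow_const 2).ennreal_ofReal
          have hm2 : Measurable fun z : X × ℝ => ENNReal.ofReal (z.2 ^ 2) :=
            (measurable_snd.pow_const 2).ennreal_ofReal
          rw [lintegral_add_left (hm1.const_mul 2), lintegral_const_mul 2 hm1,
            lintegral_const_mul 2 hm2]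
          rfl
      _ < ⊤ := by
          have h1 := hgfin
          have h2 := hY p
          refine ENNReal.add_lt_top.2 ⟨?_, ?_⟩ <;>
            exact ENNReal.mul_lt_top (by norm_num) (by assumption)
  -- integrability of fl for active sources
  have hQfin : ∀ q : P, ∫⁻ x, ENNReal.ofReal (lam q * w q x * f q x ^ 2) ∂ν < ⊤ := by
    intro q
    have : ∀ x, ENNReal.ofReal (lam q * w q x * f q x ^ 2)
        = c q * (ENNReal.ofReal (w q x) * ENNReal.ofReal (f q x ^ 2)) := by
      intro x
      rw [ENNReal.ofReal_mul (mul_nonneg (hNonneg q) (hwNonneg q x)),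
        ENNReal.ofReal_mul (hNonneg q), hc, mul_assoc]
    rw [lintegral_congr this, lintegral_const_mul _
      (f := fun x => ENNReal.ofReal (w q x) * ENNReal.ofReal (f q x ^ 2))
      (((hwMeas q).ennreal_ofReal).mul ((hfMeas q).pow_const 2).ennreal_ofReal)]
    rw [← hrw q _ ((hfMeas q).pow_const 2)]
    exact ENNReal.mul_lt_top ENNReal.ofReal_lt_top (hfL2 q)
  have hIfl : ∀ p, 0 < lam p → Integrable (fun z : X × ℝ => fl z.1 ^ 2) (μ p) := by
    intro p hp
    have hfin : ∫⁻ x, ENNReal.ofReal (fl x ^ 2) ∂((μ p).map Prod.fst) < ⊤ := by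
      refine ENNReal.lt_top_of_mul_ne_top_right (a := c p) ?_
        (by simp only [hc, ne_eq, ENNReal.ofReal_eq_zero, not_le]; exact hp)
      rw [hrw p _ (hflMeas.pow_const 2), ← lintegral_const_mul _
        (f := fun x => ENNReal.ofReal (w p x) * ENNReal.ofReal (fl x ^ 2))
        (((hwMeas p).ennreal_ofReal).mul (hflMeas.pow_const 2).ennreal_ofReal)]
      have hle : ∀ x, c p * (ENNReal.ofReal (w p x) * ENNReal.ofReal (fl x ^ 2))
          ≤ ENNReal.ofReal (∑ q, lam q * w q x * f q x ^ 2) := by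
        intro x
        have e1 : c p * (ENNReal.ofReal (w p x) * ENNReal.ofReal (fl x ^ 2))
            = ENNReal.ofReal (lam p * w p x * fl x ^ 2) := by
          rw [ENNReal.ofReal_mul (mul_nonneg (hNonneg p) (hwNonneg p x)),
            ENNReal.ofReal_mul (hNonneg p), hc, mul_assoc]
        rw [e1]
        refine ENNReal.ofReal_le_ofReal ?_
        have h2 : lam p * w p x * fl x ^ 2 ≤ (∑ q, lam q * w q x) * fl x ^ 2 := by
          refine mul_le_mul_of_nonneg_right ?_ (sq_nonneg _)
          exact Finset.single_le_sum
            (fun q _ => mul_nonneg (hNonneg q) (hwNonneg q x)) (Finset.mem_univ p)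
        refine h2.trans ?_
        have := weighted_sq_le lam (fun q => w q x) (fun q => f q x) hNonneg
          (fun q => hwNonneg q x)
        simpa [hfl] using this
      refine ne_top_of_lt (b := (⊤:ℝ≥0∞)) ?_
      calc ∫⁻ x, c p * (ENNReal.ofReal (w p x) * ENNReal.ofReal (fl x ^ 2)) ∂ν
          ≤ ∫⁻ x, ENNReal.ofReal (∑ q, lam q * w q x * f q x ^ 2) ∂ν := lintegral_mono hle
        _ = ∑ q, ∫⁻ x, ENNReal.ofReal (lam q * w q x * f q x ^ 2) ∂ν := by
            rw [← lintegral_finset_sum _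
              (f := fun q x => ENNReal.ofReal (lam q * w q x * f q x ^ 2)) fun q _ =>
              (((hwMeas q).const_mul (lam q)).mul ((hfMeas q).pow_const 2)).ennreal_ofReal]
            refine lintegral_congr fun x => ?_
            rw [ENNReal.ofReal_sum_of_nonneg fun q _ =>
              mul_nonneg (mul_nonneg (hNonneg q) (hwNonneg q x)) (sq_nonneg _)]
        _ < ⊤ := ENNReal.sum_lt_top.2 fun q _ => hQfin q
    refine ⟨((hflMeas.comp measurable_fst).pow_const 2).aestronglyMeasurable, ?_⟩
    rw [hasFiniteIntegral_iff_ofReal (Filter.Eventually.of_forall fun z => sq_nonneg _)]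
    rwa [lintegral_map ((hflMeas.pow_const 2).ennreal_ofReal) measurable_fst] at hfin
  -- Pythagoras split
  have hsplit : ∀ u : X → ℝ, Measurable u →
      (∀ p, 0 < lam p → Integrable (fun z : X × ℝ => u z.1 ^ 2) (μ p)) →
      ∑ p, c p * mseRisk (μ p) u
        = ∑ p, c p * mseRisk (μ p) (f p)
          + ∑ p, c p * ∫⁻ x, ENNReal.ofReal ((u x - f p x) ^ 2) ∂((μ p).map Prod.fst) := by
    intro u hu huI
    rw [← Finset.sum_add_distrib]
    refine Finset.sum_congr rfl fun p _ => ?_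
    by_cases hp : 0 < lam p
    · rw [pyth (hfMeas p) (hIf p) (hIY p) (hfOpt p) hu (huI p hp), mul_add]
    · have h0 : lam p = 0 := le_antisymm (not_lt.1 hp) (hNonneg p)
      simp [hc, h0]
  rw [hsplit fl hflMeas hIfl, hsplit g hg hIg]
  refine add_le_add (le_refl _) ?_
  -- reduce to a pointwise inequality over ν
  have hterm : ∀ (u : X → ℝ), Measurable u → ∀ p : P,
      c p * ∫⁻ x, ENNReal.ofReal ((u x - f p x) ^ 2) ∂((μ p).map Prod.fst)
        = ∫⁻ x, ENNReal.ofReal (lam p * w p x * (u x - f p x) ^ 2) ∂ν := by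
    intro u hu p
    rw [hrw p (fun x => (u x - f p x) ^ 2) ((hu.sub (hfMeas p)).pow_const 2), ← lintegral_const_mul _
      (f := fun x => ENNReal.ofReal (w p x) * ENNReal.ofReal ((u x - f p x) ^ 2))
      (((hwMeas p).ennreal_ofReal).mul ((hu.sub (hfMeas p)).pow_const 2).ennreal_ofReal)]
    refine lintegral_congr fun x => ?_
    rw [ENNReal.ofReal_mul (mul_nonneg (hNonneg p) (hwNonneg p x)),
      ENNReal.ofReal_mul (hNonneg p), hc, mul_assoc]
  have hsum : ∀ (u : X → ℝ), Measurable u →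
      ∑ p, c p * ∫⁻ x, ENNReal.ofReal ((u x - f p x) ^ 2) ∂((μ p).map Prod.fst)
        = ∫⁻ x, ENNReal.ofReal (∑ p, lam p * w p x * (u x - f p x) ^ 2) ∂ν := by
    intro u hu
    rw [Finset.sum_congr rfl fun p _ => hterm u hu p,
      ← lintegral_finset_sum _ (f := fun p x => ENNReal.ofReal (lam p * w p x * (u x - f p x) ^ 2))
        fun p _ =>
        (((hwMeas p).const_mul (lam p)).mul ((hu.sub (hfMeas p)).pow_const 2)).ennreal_ofReal]
    refine lintegral_congr fun x => ?_
    rw [ENNReal.ofReal_sum_of_nonneg fun p _ =>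
      mul_nonneg (mul_nonneg (hNonneg p) (hwNonneg p x)) (sq_nonneg _)]
  rw [hsum fl hflMeas, hsum g hg]
  refine lintegral_mono fun x => ENNReal.ofReal_le_ofReal ?_
  have := weighted_min lam (fun q => w q x) (fun q => f q x) hNonneg
    (fun q => hwNonneg q x) (g x)
  simpa [hfl] using this
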